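/- Let H be a finite-dimensional Hopf algebra and K a left H-comodule algebra. An element Σᵢ αᵢ ⊗ fᵢ ∈ H* ⊗ Hom(U,W) has image L'(Σᵢ αᵢ ⊗ fᵢ) lying in Hom_K(H* ⊗ U, H* ⊗ W) if and only if Σᵢ ⟨αᵢ, t⟩ fᵢ(k·w) = Σᵢ ⟨αᵢ, S⁻¹(k₍₋₁₎)t⟩ k₍₀₎·fᵢ(w) for all t ∈ H, w ∈ U, k ∈ K. -/

import Mathlib

open TensorProduct

/-- Convolution product on `H* = Dual k H`, bundled as a bilinear map. -/
noncomputable def convBil (k H : Type*) [CommSemiring k] [Semiring H] [HopfAlgebra k H] :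
    (H →ₗ[k] k) →ₗ[k] (H →ₗ[k] k) →ₗ[k] (H →ₗ[k] k) :=
  (TensorProduct.mapBilinear (RingHom.id k) H H k k).compr₂
    (((LinearMap.llcomp k H (H ⊗[k] H) k).flip (Coalgebra.comul (R := k))) ∘ₗ
      (LinearMap.llcomp k (H ⊗[k] H) (k ⊗[k] k) k (LinearMap.mul' k k)))

/-- The map `L' : H* ⊗ Hom(U,W) → Hom(H* ⊗ U, H* ⊗ W)`, `L'(α ⊗ f)(β ⊗ u) = αβ ⊗ f(u)`. -/
noncomputable def Lmap (k H : Type*) [CommSemiring k] [Semiring H] [HopfAlgebra k H]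
    (U W : Type*) [AddCommMonoid U] [Module k U] [AddCommMonoid W] [Module k W] :
    (H →ₗ[k] k) ⊗[k] (U →ₗ[k] W) →ₗ[k]
      ((H →ₗ[k] k) ⊗[k] U →ₗ[k] (H →ₗ[k] k) ⊗[k] W) :=
  TensorProduct.homTensorHomMap (RingHom.id k) (H →ₗ[k] k) U (H →ₗ[k] k) W ∘ₗ
    LinearMap.rTensor (U →ₗ[k] W) (convBil k H)

/-- The action `⇁'` of `H` on `H*`, `⟨h ⇁' β, x⟩ = ⟨β, S⁻¹(h)x⟩`, bundled. -/
noncomputable def dActL (k : Type*) {H : Type*} [CommSemiring k] [Semiring H] [Algebra k H]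
    (Sinv : H →ₗ[k] H) : H →ₗ[k] ((H →ₗ[k] k) →ₗ[k] (H →ₗ[k] k)) :=
  (LinearMap.llcomp k H H k).flip ∘ₗ (LinearMap.mul k H) ∘ₗ Sinv

/-- Scalar action of `K` on a `K`-module `V` as a linear map `K →ₗ End_k(V)`. -/
noncomputable def lsmulK (k : Type*) {K V : Type*} [CommSemiring k] [Semiring K]
    [Algebra k K] [AddCommMonoid V] [Module k V] [Module K V]
    [IsScalarTower k K V] [SMulCommClass K k V] : K →ₗ[k] (V →ₗ[k] V) where
  toFun a :=
    { toFun := fun v => a • v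
      map_add' := fun v v' => smul_add a v v'
      map_smul' := fun c v => smul_comm a c v }
  map_add' a b := LinearMap.ext fun v => add_smul a b v
  map_smul' c a := LinearMap.ext fun v => smul_assoc c a v

namespace Aux18
open Coalgebra

section Conv
variable {k : Type*} [CommSemiring k]
variable {H : Type*} [AddCommMonoid H] [Module k H] [Coalgebra k H]
variable {L : Type*} [Semiring L] [Algebra k L]

noncomputable def conv (f g : H →ₗ[k] L) : H →ₗ[k] L :=
  LinearMap.mul' k L ∘ₗ TensorProduct.map f g ∘ₗ Coalgebra.comul

lemma conv_repr (f g : H →ₗ[k] L) {a : H} {ιr : Type*} (r : Coalgebra.Repr k a ιr) :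
    conv f g a = ∑ i ∈ r.index, f (r.left i) * g (r.right i) := by
  simp only [conv, LinearMap.comp_apply, ← r.eq, map_sum, TensorProduct.map_tmul,
    LinearMap.mul'_apply]

lemma sum_counit_smul {a : H} {ιr : Type*} (r : Coalgebra.Repr k a ιr) :
    ∑ i ∈ r.index, Coalgebra.counit (R := k) (r.left i) • r.right i = a := by
  have h := congrArg (TensorProduct.lid k H) (Coalgebra.sum_counit_tmul_eq r)
  rw [map_sum] at h
  simp only [TensorProduct.lid_tmul, one_smul] at h
  exact h

lemma sum_smul_counit {a : H} {ιr : Type*} (r : Coalgebra.Repr k a ιr) :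
    ∑ i ∈ r.index, Coalgebra.counit (R := k) (r.right i) • r.left i = a := by
  have h := congrArg (TensorProduct.rid k H) (Coalgebra.sum_tmul_counit_eq r)
  rw [map_sum] at h
  simp only [TensorProduct.rid_tmul, one_smul] at h
  exact h

lemma conv_counit_right (f : H →ₗ[k] L) :
    conv f (Algebra.linearMap k L ∘ₗ Coalgebra.counit) = f := by
  ext a
  rw [conv_repr _ _ (ℛ k a)]
  calc ∑ i ∈ (ℛ k a).index, f ((ℛ k a).left i) *
        (Algebra.linearMap k L ∘ₗ Coalgebra.counit) ((ℛ k a).right i)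
      = ∑ i ∈ (ℛ k a).index, f (Coalgebra.counit (R := k) ((ℛ k a).right i) • (ℛ k a).left i) := by
        refine Finset.sum_congr rfl fun i _ => ?_
        simp [Algebra.smul_def, ← Algebra.commutes]
    _ = f a := by rw [← map_sum, sum_smul_counit]

lemma conv_counit_left (f : H →ₗ[k] L) :
    conv (Algebra.linearMap k L ∘ₗ Coalgebra.counit) f = f := by
  ext a
  rw [conv_repr _ _ (ℛ k a)]
  calc ∑ i ∈ (ℛ k a).index, (Algebra.linearMap k L ∘ₗ Coalgebra.counit) ((ℛ k a).left i) *
        f ((ℛ k a).right i)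
      = ∑ i ∈ (ℛ k a).index, f (Coalgebra.counit (R := k) ((ℛ k a).left i) • (ℛ k a).right i) := by
        refine Finset.sum_congr rfl fun i _ => ?_
        simp [Algebra.smul_def]
    _ = f a := by rw [← map_sum, sum_counit_smul]

lemma conv_assoc (f g h : H →ₗ[k] L) : conv (conv f g) h = conv f (conv g h) := by
  ext a
  set r := ℛ k a with hr
  set a₁ : (i : r.ι) → Coalgebra.Repr k (r.left i) (H × H) := fun i => ℛ k (r.left i) with ha₁
  set a₂ : (i : r.ι) → Coalgebra.Repr k (r.right i) (H × H) := fun i => ℛ k (r.right i) with ha₂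
  have key := Coalgebra.sum_map_tmul_tmul_eq (f : H →ₗ[k] L) g h a (repr := r) (a₁ := a₁) (a₂ := a₂)
  apply_fun (LinearMap.mul' k L ∘ₗ LinearMap.lTensor L (LinearMap.mul' k L)) at key
  simp only [map_sum, LinearMap.comp_apply, LinearMap.lTensor_tmul, LinearMap.mul'_apply] at key
  rw [conv_repr _ _ r, conv_repr _ _ r]
  calc ∑ i ∈ r.index, conv f g (r.left i) * h (r.right i)
      = ∑ i ∈ r.index, ∑ j ∈ (a₁ i).index,
          f ((a₁ i).left j) * (g ((a₁ i).right j) * h (r.right i)) := by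
        refine Finset.sum_congr rfl fun i _ => ?_
        rw [conv_repr _ _ (a₁ i), Finset.sum_mul]
        exact Finset.sum_congr rfl fun j _ => (mul_assoc _ _ _)
    _ = ∑ i ∈ r.index, ∑ j ∈ (a₂ i).index,
          f (r.left i) * (g ((a₂ i).left j) * h ((a₂ i).right j)) := key.symm
    _ = ∑ i ∈ r.index, f (r.left i) * conv g h (r.right i) := by
        refine Finset.sum_congr rfl fun i _ => ?_
        rw [conv_repr _ _ (a₂ i), Finset.mul_sum]

lemma conv_smul_right (f g : H →ₗ[k] L) (c : k) : conv f (c • g) = c • conv f g := by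
  ext a
  simp [conv, TensorProduct.map_smul_right]

end Conv

section Hopf
variable {k : Type*} [CommSemiring k]
variable {H : Type*} [Semiring H] [HopfAlgebra k H]

local notation "S" => (HopfAlgebra.antipode (R := k) (A := H))
local notation "Δ" => (Coalgebra.comul (R := k) (A := H))
local notation "ε" => (Coalgebra.counit (R := k) (A := H))

/-- the unit of the convolution algebra `Hom(H, H ⊗ H)` -/
noncomputable def E : H →ₗ[k] (H ⊗[k] H) :=
  Algebra.linearMap k (H ⊗[k] H) ∘ₗ Coalgebra.counit

/-- `G = (S ⊗ S) ∘ τ ∘ Δ` -/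
noncomputable def G : H →ₗ[k] (H ⊗[k] H) :=
  TensorProduct.map S S ∘ₗ (TensorProduct.comm k H H).toLinearMap ∘ₗ Coalgebra.comul

lemma hA : conv Δ (Δ ∘ₗ S) = (E (k := k) (H := H)) := by
  ext a
  rw [conv_repr _ _ (ℛ k a)]
  calc ∑ i ∈ (ℛ k a).index, Δ ((ℛ k a).left i) * (Δ ∘ₗ S) ((ℛ k a).right i)
      = Δ (∑ i ∈ (ℛ k a).index, (ℛ k a).left i * S ((ℛ k a).right i)) := by
        rw [map_sum]
        refine Finset.sum_congr rfl fun i _ => ?_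
        simp [Bialgebra.comul_mul]
    _ = E a := by
        rw [HopfAlgebra.sum_mul_antipode_eq_algebraMap_counit (ℛ k a)]
        simp [E, Algebra.algebraMap_eq_smul_one, map_smul]

lemma hB : conv (G (k := k) (H := H)) Δ = E := by
  ext a
  set r := ℛ k a with hr
  set a₁ : (i : r.ι) → Coalgebra.Repr k (r.left i) (H × H) := fun i => ℛ k (r.left i) with ha₁
  set a₂ : (i : r.ι) → Coalgebra.Repr k (r.right i) (H × H) := fun i => ℛ k (r.right i) with ha₂
  rw [conv_repr _ _ r]
  have hG : ∀ i, G (k := k) (r.left i) =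
      ∑ j ∈ (a₁ i).index, S ((a₁ i).right j) ⊗ₜ[k] S ((a₁ i).left j) := by
    intro i
    rw [G, LinearMap.comp_apply, LinearMap.comp_apply, ← (a₁ i).eq]
    simp [map_sum]
  set ψ : H ⊗[k] (H ⊗[k] H) →ₗ[k] (H ⊗[k] H) :=
    LinearMap.mul' k (H ⊗[k] H) ∘ₗ
      TensorProduct.map (TensorProduct.map S S ∘ₗ (TensorProduct.comm k H H).toLinearMap)
        Coalgebra.comul ∘ₗ (TensorProduct.assoc k H H H).symm.toLinearMap with hψdef
  have hψ : ∀ x y z : H, ψ (x ⊗ₜ[k] (y ⊗ₜ[k] z)) = (S y ⊗ₜ[k] S x) * Δ z := by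
    intro x y z
    simp [hψdef]
  have key := congrArg (⇑ψ) (Coalgebra.sum_tmul_tmul_eq r a₁ a₂)
  simp only [map_sum, hψ] at key
  calc ∑ i ∈ r.index, G (k := k) (r.left i) * Δ (r.right i)
      = ∑ i ∈ r.index, ∑ j ∈ (a₁ i).index,
          (S ((a₁ i).right j) ⊗ₜ[k] S ((a₁ i).left j)) * Δ (r.right i) := by
        refine Finset.sum_congr rfl fun i _ => ?_
        rw [hG i, Finset.sum_mul]
    _ = ∑ i ∈ r.index, ∑ j ∈ (a₂ i).index,
          (S ((a₂ i).left j) ⊗ₜ[k] S (r.left i)) * Δ ((a₂ i).right j) := key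
    _ = ∑ i ∈ r.index, (1 : H) ⊗ₜ[k] (S (r.left i) * r.right i) := by
        refine Finset.sum_congr rfl fun i _ => ?_
        set c := r.left i
        set w := r.right i
        set χ : H ⊗[k] (H ⊗[k] H) →ₗ[k] (H ⊗[k] H) :=
          LinearMap.mul' k (H ⊗[k] H) ∘ₗ
            TensorProduct.map ((TensorProduct.mk k H H).flip (S c) ∘ₗ S) LinearMap.id with hχdef
        have hχ : ∀ (x : H) (u : H ⊗[k] H), χ (x ⊗ₜ[k] u) = (S x ⊗ₜ[k] S c) * u := by
          intro x u; simp [hχdef]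
        have e1 : ∑ j ∈ (a₂ i).index,
            (S ((a₂ i).left j) ⊗ₜ[k] S c) * Δ ((a₂ i).right j)
            = χ ((LinearMap.lTensor H Δ) (Δ w)) := by
          rw [← (a₂ i).eq, map_sum, map_sum]
          refine Finset.sum_congr rfl fun j _ => ?_
          rw [LinearMap.lTensor_tmul, hχ]
        rw [e1, ← Coalgebra.coassoc_apply w]
        set cc : (j : (a₂ i).ι) → Coalgebra.Repr k ((a₂ i).left j) (H × H) :=
          fun j => ℛ k ((a₂ i).left j) with hcc
        have e2 : (LinearMap.rTensor H Δ) (Δ w) =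
            ∑ j ∈ (a₂ i).index, ∑ p ∈ (cc j).index,
              ((cc j).left p ⊗ₜ[k] (cc j).right p) ⊗ₜ[k] (a₂ i).right j := by
          rw [← (a₂ i).eq, map_sum]
          refine Finset.sum_congr rfl fun j _ => ?_
          rw [LinearMap.rTensor_tmul, ← (cc j).eq, TensorProduct.sum_tmul]
        rw [e2]
        simp only [map_sum, TensorProduct.assoc_tmul, hχ]
        calc ∑ j ∈ (a₂ i).index, ∑ p ∈ (cc j).index,
              (S ((cc j).left p) ⊗ₜ[k] S c) * ((cc j).right p ⊗ₜ[k] (a₂ i).right j)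
            = ∑ j ∈ (a₂ i).index,
                Coalgebra.counit (R := k) ((a₂ i).left j) •
                  ((1 : H) ⊗ₜ[k] (S c * (a₂ i).right j)) := by
              refine Finset.sum_congr rfl fun j _ => ?_
              calc ∑ p ∈ (cc j).index,
                    (S ((cc j).left p) ⊗ₜ[k] S c) * ((cc j).right p ⊗ₜ[k] (a₂ i).right j)
                  = (∑ p ∈ (cc j).index, S ((cc j).left p) * (cc j).right p) ⊗ₜ[k]
                      (S c * (a₂ i).right j) := by
                    rw [TensorProduct.sum_tmul]
                    refine Finset.sum_congr rfl fun p _ => ?_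
                    rw [Algebra.TensorProduct.tmul_mul_tmul]
                _ = _ := by
                    rw [HopfAlgebra.sum_antipode_mul_eq_algebraMap_counit (cc j)]
                    simp [Algebra.algebraMap_eq_smul_one, TensorProduct.smul_tmul']
            _ = (1 : H) ⊗ₜ[k] (S c * w) := by
              simp only [← TensorProduct.tmul_smul, ← mul_smul_comm]
              rw [← TensorProduct.tmul_sum, ← Finset.mul_sum, sum_counit_smul (a₂ i)]
    _ = E a := by
        rw [← TensorProduct.tmul_sum, HopfAlgebra.sum_antipode_mul_eq_algebraMap_counit r]
        rw [E]
        simp only [LinearMap.comp_apply, Algebra.linearMap_apply,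
          Algebra.algebraMap_eq_smul_one]
        rw [TensorProduct.tmul_smul, ← Algebra.TensorProduct.one_def]

lemma comul_antipode' : (Δ ∘ₗ S) = G (k := k) (H := H) := by
  calc Δ ∘ₗ S = conv (E (k := k) (H := H)) (Δ ∘ₗ S) := (conv_counit_left _).symm
    _ = conv (conv (G (k := k) (H := H)) Δ) (Δ ∘ₗ S) := by rw [hB]
    _ = conv (G (k := k) (H := H)) (conv Δ (Δ ∘ₗ S)) := conv_assoc _ _ _
    _ = conv (G (k := k) (H := H)) (E (k := k) (H := H)) := by rw [hA]
    _ = G (k := k) (H := H) := conv_counit_right _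

lemma counit_antipode (a : H) : ε (S a) = ε a := by
  have h := congrArg (ε) (HopfAlgebra.sum_antipode_mul_eq_algebraMap_counit (ℛ k a))
  rw [map_sum] at h
  have h2 : ∑ i ∈ (ℛ k a).index, ε (S ((ℛ k a).left i) * (ℛ k a).right i)
      = ε (S a) := by
    calc ∑ i ∈ (ℛ k a).index, ε (S ((ℛ k a).left i) * (ℛ k a).right i)
        = ∑ i ∈ (ℛ k a).index,
            ε (S (Coalgebra.counit (R := k) ((ℛ k a).right i) • (ℛ k a).left i)) := by
          refine Finset.sum_congr rfl fun i _ => ?_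
          rw [Bialgebra.counit_mul, map_smul, map_smul, smul_eq_mul, mul_comm]
      _ = ε (S a) := by rw [← map_sum, ← map_sum, sum_smul_counit]
  rw [h2] at h
  simpa [Algebra.algebraMap_eq_smul_one] using h

end Hopf

section SinvFacts
variable {k : Type*} [CommSemiring k]
variable {H : Type*} [Semiring H] [HopfAlgebra k H]
variable (Sinv : H →ₗ[k] H)
variable (hS1 : ∀ x, Sinv ((HopfAlgebra.antipode (R := k) : H →ₗ[k] H) x) = x)
variable (hS2 : ∀ x, (HopfAlgebra.antipode (R := k) : H →ₗ[k] H) (Sinv x) = x)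

local notation "S" => (HopfAlgebra.antipode (R := k) (A := H))

include hS1 hS2 in
lemma comul_Sinv_repr (x : H) {ιr : Type*} (r : Coalgebra.Repr k x ιr) :
    Coalgebra.comul (R := k) (Sinv x)
      = ∑ i ∈ r.index, Sinv (r.right i) ⊗ₜ[k] Sinv (r.left i) := by
  have hSS : ∀ u : H ⊗[k] H,
      TensorProduct.map Sinv Sinv (TensorProduct.map S S u) = u := by
    intro u
    induction u using TensorProduct.induction_on with
    | zero => simp
    | tmul a b => simp [hS1]
    | add a b ha hb => simp [ha, hb]
  have h0 : Coalgebra.comul (R := k) (S (Sinv x))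
      = TensorProduct.map S S ((TensorProduct.comm k H H) (Coalgebra.comul (Sinv x))) :=
    congrArg (fun (g : H →ₗ[k] H ⊗[k] H) => g (Sinv x)) (comul_antipode' (k := k) (H := H))
  rw [hS2 x] at h0
  have h1 := congrArg (TensorProduct.map Sinv Sinv) h0
  rw [hSS] at h1
  have h2 := congrArg (TensorProduct.comm k H H) h1.symm
  have h3 : (TensorProduct.comm k H H) ((TensorProduct.comm k H H)
      (Coalgebra.comul (R := k) (Sinv x))) = Coalgebra.comul (R := k) (Sinv x) := by
    generalize Coalgebra.comul (R := k) (Sinv x) = u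
    induction u using TensorProduct.induction_on with
    | zero => simp
    | tmul a b => simp
    | add a b ha hb => simp [ha, hb]
  rw [h3] at h2
  rw [h2, ← r.eq]
  simp [map_sum]

include hS2 in
lemma counit_Sinv (x : H) :
    Coalgebra.counit (R := k) (Sinv x) = Coalgebra.counit (R := k) x := by
  have := counit_antipode (k := k) (Sinv x)
  rw [hS2 x] at this
  exact this.symm

include hS1 hS2 in
lemma conv_Sinv_mul (α β : H →ₗ[k] k) (h t : H)
    {ι₁ ι₂ : Type*} (rh : Coalgebra.Repr k h ι₁) (rt : Coalgebra.Repr k t ι₂) :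
    conv α β (Sinv h * t)
      = ∑ p ∈ rh.index, ∑ s ∈ rt.index,
          α (Sinv (rh.right p) * rt.left s) * β (Sinv (rh.left p) * rt.right s) := by
  rw [conv, LinearMap.comp_apply, LinearMap.comp_apply]
  rw [Bialgebra.comul_mul, comul_Sinv_repr Sinv hS1 hS2 h rh, ← rt.eq]
  rw [Finset.sum_mul_sum]
  simp only [Algebra.TensorProduct.tmul_mul_tmul, map_sum, TensorProduct.map_tmul,
    LinearMap.mul'_apply]

end SinvFacts

section Plumbing
variable {k H : Type*} [CommSemiring k] [Semiring H] [HopfAlgebra k H]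

lemma tensor_exists_fin {M N : Type*} [AddCommMonoid M] [AddCommMonoid N]
    [Module k M] [Module k N] (x : M ⊗[k] N) :
    ∃ (n : ℕ) (f : Fin n → M) (g : Fin n → N), x = ∑ j, f j ⊗ₜ[k] g j := by
  obtain ⟨s, hs⟩ := TensorProduct.exists_finset x
  refine ⟨s.card, fun j => ((s.equivFin.symm j : s) : M × N).1,
    fun j => ((s.equivFin.symm j : s) : M × N).2, ?_⟩
  rw [hs, ← Finset.sum_coe_sort s (fun p => p.1 ⊗ₜ[k] p.2)]
  exact (Fintype.sum_equiv s.equivFin.symm _ _ (fun j => rfl)).symm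

lemma conv_counit_k (f : H →ₗ[k] k) : conv f (Coalgebra.counit (R := k) (A := H)) = f := by
  have h : (Algebra.linearMap k k ∘ₗ Coalgebra.counit (R := k) (A := H))
      = Coalgebra.counit (R := k) (A := H) := by
    ext x; simp [Algebra.linearMap_apply]
  rw [← h]; exact conv_counit_right f

lemma convBil_eq (α β : H →ₗ[k] k) : convBil k H α β = conv α β := rfl

lemma dActL_apply (Sinv : H →ₗ[k] H) (h x : H) (β : H →ₗ[k] k) :
    dActL k Sinv h β x = β (Sinv h * x) := rfl

lemma dActL_counit (Sinv : H →ₗ[k] H) (h : H) :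
    dActL k Sinv h (Coalgebra.counit (R := k) (A := H))
      = Coalgebra.counit (R := k) (Sinv h) • Coalgebra.counit (R := k) (A := H) := by
  ext x
  simp [dActL, LinearMap.mul_apply', Bialgebra.counit_mul, smul_eq_mul]

variable {K : Type*} [Semiring K] [Algebra k K]

lemma rho_apply (Sinv : H →ₗ[k] H) {V : Type*} [AddCommMonoid V] [Module k V] [Module K V]
    [IsScalarTower k K V] [SMulCommClass K k V]
    (x : H ⊗[k] K) {n : ℕ} (h : Fin n → H) (c : Fin n → K)
    (hx : x = ∑ j, h j ⊗ₜ[k] c j) (β : H →ₗ[k] k) (v : V) :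
    TensorProduct.lift
      (((TensorProduct.mapBilinear (RingHom.id k) (H →ₗ[k] k) V (H →ₗ[k] k) V)
          ∘ₗ dActL k Sinv).compl₂ (lsmulK k)) x (β ⊗ₜ[k] v)
      = ∑ j, (dActL k Sinv (h j) β) ⊗ₜ[k] (c j • v) := by
  subst hx
  rw [map_sum, LinearMap.sum_apply]
  refine Finset.sum_congr rfl fun j _ => ?_
  simp [TensorProduct.lift.tmul, LinearMap.compl₂_apply, TensorProduct.mapBilinear_apply, lsmulK]

lemma Lmap_sum_tmul {U W : Type*} [AddCommMonoid U] [Module k U] [AddCommMonoid W] [Module k W]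
    {ι : Type} [Fintype ι] (α : ι → (H →ₗ[k] k)) (f : ι → (U →ₗ[k] W))
    (β : H →ₗ[k] k) (u : U) :
    Lmap k H U W (∑ i, α i ⊗ₜ[k] f i) (β ⊗ₜ[k] u)
      = ∑ i, conv (α i) β ⊗ₜ[k] f i u := by
  rw [Lmap, LinearMap.comp_apply, map_sum, map_sum, LinearMap.sum_apply]
  refine Finset.sum_congr rfl fun i _ => ?_
  rw [LinearMap.rTensor_tmul, TensorProduct.homTensorHomMap_apply, TensorProduct.map_tmul,
    convBil_eq]

end Plumbing
end Aux18

open Aux18 Coalgebra in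
set_option maxHeartbeats 1600000 in
set_option synthInstance.maxHeartbeats 400000 in
/-- Characterization of the elements `Σᵢ αᵢ ⊗ fᵢ` of `H* ⊗ Hom(U,W)` whose image under
`L'` is a `K`-module map `H* ⊗ U → H* ⊗ W`. -/
theorem stmt18 {k H K : Type*} [Field k] [Ring H] [HopfAlgebra k H] [FiniteDimensional k H]
    (Sinv : H →ₗ[k] H)
    (hS1 : ∀ x, Sinv ((HopfAlgebra.antipode (R := k) : H →ₗ[k] H) x) = x)
    (hS2 : ∀ x, (HopfAlgebra.antipode (R := k) : H →ₗ[k] H) (Sinv x) = x)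
    [Ring K] [Algebra k K] [FiniteDimensional k K]
    (lam : K →ₐ[k] H ⊗[k] K)
    (hcounit : ∀ x : K,
      (TensorProduct.lid k K) ((LinearMap.rTensor K (Coalgebra.counit (R := k))) (lam x)) = x)
    (hcoassoc : ∀ x : K,
      (LinearMap.rTensor K (Coalgebra.comul (R := k))) (lam x)
        = (TensorProduct.assoc k H H K).symm
            ((LinearMap.lTensor H lam.toLinearMap) (lam x)))
    (U W : Type*) [AddCommGroup U] [Module k U] [Module K U]
    [IsScalarTower k K U] [SMulCommClass K k U] [FiniteDimensional k U]
    [AddCommGroup W] [Module k W] [Module K W]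
    [IsScalarTower k K W] [SMulCommClass K k W] [FiniteDimensional k W]
    (ι : Type) [Fintype ι] (α : ι → (H →ₗ[k] k)) (f : ι → (U →ₗ[k] W)) :
    let ρU : K → ((H →ₗ[k] k) ⊗[k] U →ₗ[k] (H →ₗ[k] k) ⊗[k] U) :=
      fun a => (TensorProduct.lift
        (((TensorProduct.mapBilinear (RingHom.id k) (H →ₗ[k] k) U (H →ₗ[k] k) U)
            ∘ₗ dActL k Sinv).compl₂ (lsmulK k))) (lam a)
    let ρW : K → ((H →ₗ[k] k) ⊗[k] W →ₗ[k] (H →ₗ[k] k) ⊗[k] W) :=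
      fun a => (TensorProduct.lift
        (((TensorProduct.mapBilinear (RingHom.id k) (H →ₗ[k] k) W (H →ₗ[k] k) W)
            ∘ₗ dActL k Sinv).compl₂ (lsmulK k))) (lam a)
    ((∀ a : K,
        (Lmap k H U W (∑ i, α i ⊗ₜ[k] f i)) ∘ₗ ρU a
          = ρW a ∘ₗ (Lmap k H U W (∑ i, α i ⊗ₜ[k] f i)))
      ↔ (∀ (a : K) (n : ℕ) (ha : Fin n → H) (kb : Fin n → K),
          lam a = ∑ j, ha j ⊗ₜ[k] kb j →
          ∀ (t : H) (w : U),
            ∑ i, α i t • (f i) (a • w)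
              = ∑ i, ∑ j, α i (Sinv (ha j) * t) • (kb j • (f i) w))) := by
  intro ρU ρW
  classical
  have dth_inj : ∀ x y : (H →ₗ[k] k) ⊗[k] W,
      (∀ t, dualTensorHom k H W x t = dualTensorHom k H W y t) → x = y := by
    intro x y hxy
    have hx : (dualTensorHomEquiv k H W) x = dualTensorHom k H W x :=
      rfl
    have hy : (dualTensorHomEquiv k H W) y = dualTensorHom k H W y :=
      rfl
    exact (dualTensorHomEquiv k H W).injective (by rw [hx, hy]; exact LinearMap.ext hxy)
  constructor
  · -- forward direction
    intro hcomm a n ha kb hrep t w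
    have h0 := LinearMap.congr_fun (hcomm a) ((Coalgebra.counit (R := k) (A := H)) ⊗ₜ[k] w)
    simp only [LinearMap.comp_apply, ρU, ρW] at h0
    rw [rho_apply Sinv (lam a) ha kb hrep _ w, map_sum,
      Lmap_sum_tmul α f _ w] at h0
    simp only [conv_counit_k] at h0
    have hρW : ∀ (β : H →ₗ[k] k) (v : W),
        TensorProduct.lift
          (((TensorProduct.mapBilinear (RingHom.id k) (H →ₗ[k] k) W (H →ₗ[k] k) W)
              ∘ₗ dActL k Sinv).compl₂ (lsmulK k)) (lam a) (β ⊗ₜ[k] v)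
          = ∑ j, (dActL k Sinv (ha j) β) ⊗ₜ[k] (kb j • v) :=
      fun β v => rho_apply Sinv (lam a) ha kb hrep β v
    have hL : ∀ j : Fin n, Lmap k H U W (∑ i, α i ⊗ₜ[k] f i)
        ((dActL k Sinv (ha j) (Coalgebra.counit (R := k))) ⊗ₜ[k] (kb j • w))
        = ∑ i, ((Coalgebra.counit (R := k) (ha j)) • α i) ⊗ₜ[k] f i (kb j • w) := by
      intro j
      rw [Lmap_sum_tmul α f _ _]
      refine Finset.sum_congr rfl fun i _ => ?_
      rw [dActL_counit, counit_Sinv Sinv hS2, conv_smul_right, conv_counit_k]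
    simp only [hL] at h0
    have hρWs : TensorProduct.lift
        (((TensorProduct.mapBilinear (RingHom.id k) (H →ₗ[k] k) W (H →ₗ[k] k) W)
            ∘ₗ dActL k Sinv).compl₂ (lsmulK k)) (lam a) (∑ i, α i ⊗ₜ[k] f i w)
        = ∑ i, ∑ j, (dActL k Sinv (ha j) (α i)) ⊗ₜ[k] (kb j • f i w) := by
      rw [map_sum]
      exact Finset.sum_congr rfl fun i _ => hρW _ _
    rw [hρWs] at h0
    have h1 := congrArg (fun z => dualTensorHom k H W z t) h0
    simp only [map_sum, LinearMap.sum_apply, dualTensorHom_apply, LinearMap.smul_apply,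
      smul_eq_mul] at h1
    simp only [dActL_apply] at h1
    have haact : ∑ j, (Coalgebra.counit (R := k) (ha j)) • kb j = a := by
      have h2 := hcounit a
      rw [hrep, map_sum, map_sum] at h2
      simpa using h2
    calc ∑ i, α i t • f i (a • w)
        = ∑ i, ∑ j, (Coalgebra.counit (R := k) (ha j) * α i t) • f i (kb j • w) := by
          refine Finset.sum_congr rfl fun i _ => ?_
          rw [← haact, Finset.sum_smul, map_sum, Finset.smul_sum]
          refine Finset.sum_congr rfl fun j _ => ?_
          rw [smul_assoc, map_smul, smul_smul, mul_comm (α i t) _]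
      _ = ∑ j, ∑ i, (Coalgebra.counit (R := k) (ha j) * α i t) • f i (kb j • w) :=
          Finset.sum_comm
      _ = ∑ i, ∑ j, α i (Sinv (ha j) * t) • (kb j • f i w) := h1
  · -- backward direction
    intro hyp a
    obtain ⟨n, hh, kk, hrep⟩ := tensor_exists_fin (k := k) (lam a)
    choose n2 gg ll hrep2 using fun j : Fin n => tensor_exists_fin (k := k) (lam (kk j))
    apply TensorProduct.ext'
    intro β u
    simp only [LinearMap.comp_apply, ρU, ρW]
    refine dth_inj _ _ fun t => ?_
    set rt := ℛ k t with hrt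
    set rh : (j : Fin n) → Coalgebra.Repr k (hh j) (H × H) := fun j => ℛ k (hh j) with hrh
    -- coassociativity of the coaction, in sum form
    have CA : ∑ j, ∑ p ∈ (rh j).index,
          ((rh j).left p ⊗ₜ[k] (rh j).right p) ⊗ₜ[k] kk j
        = ∑ j, ∑ m, (hh j ⊗ₜ[k] gg j m) ⊗ₜ[k] ll j m := by
      calc ∑ j, ∑ p ∈ (rh j).index, ((rh j).left p ⊗ₜ[k] (rh j).right p) ⊗ₜ[k] kk j
          = (LinearMap.rTensor K (Coalgebra.comul (R := k))) (∑ j, hh j ⊗ₜ[k] kk j) := by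
            rw [map_sum]
            refine Finset.sum_congr rfl fun j _ => ?_
            rw [LinearMap.rTensor_tmul, ← (rh j).eq, TensorProduct.sum_tmul]
        _ = (TensorProduct.assoc k H H K).symm
              ((LinearMap.lTensor H lam.toLinearMap) (∑ j, hh j ⊗ₜ[k] kk j)) := by
            rw [← hrep]; exact hcoassoc a
        _ = ∑ j, ∑ m, (hh j ⊗ₜ[k] gg j m) ⊗ₜ[k] ll j m := by
            rw [map_sum, map_sum]
            refine Finset.sum_congr rfl fun j _ => ?_
            rw [LinearMap.lTensor_tmul]
            show (TensorProduct.assoc k H H K).symm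
              (hh j ⊗ₜ[k] lam (kk j)) = _
            rw [hrep2 j, TensorProduct.tmul_sum, map_sum]
            exact Finset.sum_congr rfl fun m _ => TensorProduct.assoc_symm_tmul _ _ _
    -- the bridge, for fixed i and s
    have key2 : ∀ (i : ι) (s : rt.ι),
        (∑ j, ∑ m, (β (Sinv (hh j) * rt.right s) * α i (Sinv (gg j m) * rt.left s))
            • (ll j m • f i u))
        = ∑ j, ∑ p ∈ (rh j).index,
            (β (Sinv ((rh j).left p) * rt.right s) * α i (Sinv ((rh j).right p) * rt.left s))
              • (kk j • f i u) := by
      intro i s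
      set φ : H →ₗ[k] k := β ∘ₗ LinearMap.mulRight k (rt.right s) ∘ₗ Sinv with hφ
      set ψ : H →ₗ[k] k := α i ∘ₗ LinearMap.mulRight k (rt.left s) ∘ₗ Sinv with hψ
      set m0 : K →ₗ[k] W := (LinearMap.flip (lsmulK k (K := K) (V := W))) (f i u) with hm0
      set Θ : (H ⊗[k] H) ⊗[k] K →ₗ[k] W :=
        TensorProduct.lift
          ((TensorProduct.lift ((LinearMap.mul k k ∘ₗ φ).compl₂ ψ)).smulRight m0) with hΘ
      have hΘval : ∀ (x y : H) (c : K), Θ ((x ⊗ₜ[k] y) ⊗ₜ[k] c)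
          = (β (Sinv x * rt.right s) * α i (Sinv y * rt.left s)) • (c • f i u) := by
        intro x y c
        simp [hΘ, hφ, hψ, hm0, TensorProduct.lift.tmul, LinearMap.smulRight_apply,
          lsmulK, LinearMap.mul_apply', LinearMap.mulRight_apply, LinearMap.flip_apply]
      have key := congrArg (⇑Θ) CA
      simp only [map_sum, hΘval] at key
      exact key.symm
    -- compute the left-hand side
    have hLHS : dualTensorHom k H W
        ((Lmap k H U W (∑ i, α i ⊗ₜ[k] f i))
          (TensorProduct.lift
            (((TensorProduct.mapBilinear (RingHom.id k) (H →ₗ[k] k) U (H →ₗ[k] k) U)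
                ∘ₗ dActL k Sinv).compl₂ (lsmulK k)) (lam a) (β ⊗ₜ[k] u))) t
        = ∑ s ∈ rt.index, ∑ i, ∑ j, ∑ m,
            (β (Sinv (hh j) * rt.right s) * α i (Sinv (gg j m) * rt.left s))
              • (ll j m • f i u) := by
      rw [rho_apply Sinv (lam a) hh kk hrep β u]
      rw [map_sum (Lmap k H U W (∑ i, α i ⊗ₜ[k] f i)) _ Finset.univ]
      have e1 : ∀ j : Fin n, Lmap k H U W (∑ i, α i ⊗ₜ[k] f i)
          ((dActL k Sinv (hh j) β) ⊗ₜ[k] (kk j • u))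
          = ∑ i, conv (α i) (dActL k Sinv (hh j) β) ⊗ₜ[k] f i (kk j • u) :=
        fun j => Lmap_sum_tmul α f _ _
      simp only [e1, map_sum, LinearMap.sum_apply, dualTensorHom_apply]
      calc ∑ j, ∑ i, (conv (α i) (dActL k Sinv (hh j) β)) t • f i (kk j • u)
          = ∑ j, ∑ s ∈ rt.index, ∑ i, ∑ m,
              (β (Sinv (hh j) * rt.right s) * α i (Sinv (gg j m) * rt.left s))
                • (ll j m • f i u) := by
            refine Finset.sum_congr rfl fun j _ => ?_
            calc ∑ i, (conv (α i) (dActL k Sinv (hh j) β)) t • f i (kk j • u)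
                = ∑ i, ∑ s ∈ rt.index,
                    (α i (rt.left s) * β (Sinv (hh j) * rt.right s)) • f i (kk j • u) := by
                  refine Finset.sum_congr rfl fun i _ => ?_
                  rw [conv_repr _ _ rt, Finset.sum_smul]
                  refine Finset.sum_congr rfl fun s _ => ?_
                  rw [dActL_apply]
              _ = ∑ s ∈ rt.index, ∑ i,
                    (α i (rt.left s) * β (Sinv (hh j) * rt.right s)) • f i (kk j • u) :=
                  Finset.sum_comm
              _ = ∑ s ∈ rt.index, ∑ i, ∑ m,
                    (β (Sinv (hh j) * rt.right s) * α i (Sinv (gg j m) * rt.left s))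
                      • (ll j m • f i u) := by
                  refine Finset.sum_congr rfl fun s _ => ?_
                  calc ∑ i, (α i (rt.left s) * β (Sinv (hh j) * rt.right s)) • f i (kk j • u)
                      = β (Sinv (hh j) * rt.right s) •
                          ∑ i, α i (rt.left s) • f i (kk j • u) := by
                        rw [Finset.smul_sum]
                        refine Finset.sum_congr rfl fun i _ => ?_
                        rw [smul_smul, mul_comm]
                    _ = β (Sinv (hh j) * rt.right s) •
                          ∑ i, ∑ m, α i (Sinv (gg j m) * rt.left s) • (ll j m • f i u) := by
                        rw [hyp (kk j) (n2 j) (gg j) (ll j) (hrep2 j) (rt.left s) u]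
                    _ = ∑ i, ∑ m,
                          (β (Sinv (hh j) * rt.right s) * α i (Sinv (gg j m) * rt.left s))
                            • (ll j m • f i u) := by
                        rw [Finset.smul_sum]
                        refine Finset.sum_congr rfl fun i _ => ?_
                        rw [Finset.smul_sum]
                        refine Finset.sum_congr rfl fun m _ => ?_
                        rw [smul_smul]
        _ = ∑ s ∈ rt.index, ∑ j, ∑ i, ∑ m,
              (β (Sinv (hh j) * rt.right s) * α i (Sinv (gg j m) * rt.left s))
                • (ll j m • f i u) := Finset.sum_comm
        _ = ∑ s ∈ rt.index, ∑ i, ∑ j, ∑ m,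
              (β (Sinv (hh j) * rt.right s) * α i (Sinv (gg j m) * rt.left s))
                • (ll j m • f i u) := Finset.sum_congr rfl fun s _ => Finset.sum_comm
    -- compute the right-hand side
    have hRHS : dualTensorHom k H W
        (TensorProduct.lift
          (((TensorProduct.mapBilinear (RingHom.id k) (H →ₗ[k] k) W (H →ₗ[k] k) W)
              ∘ₗ dActL k Sinv).compl₂ (lsmulK k)) (lam a)
          ((Lmap k H U W (∑ i, α i ⊗ₜ[k] f i)) (β ⊗ₜ[k] u))) t
        = ∑ s ∈ rt.index, ∑ i, ∑ j, ∑ p ∈ (rh j).index,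
            (β (Sinv ((rh j).left p) * rt.right s) * α i (Sinv ((rh j).right p) * rt.left s))
              • (kk j • f i u) := by
      rw [Lmap_sum_tmul α f β u]
      rw [map_sum (TensorProduct.lift
          (((TensorProduct.mapBilinear (RingHom.id k) (H →ₗ[k] k) W (H →ₗ[k] k) W)
              ∘ₗ dActL k Sinv).compl₂ (lsmulK k)) (lam a)) _ Finset.univ]
      have e2 : ∀ i : ι, TensorProduct.lift
          (((TensorProduct.mapBilinear (RingHom.id k) (H →ₗ[k] k) W (H →ₗ[k] k) W)
              ∘ₗ dActL k Sinv).compl₂ (lsmulK k)) (lam a) ((conv (α i) β) ⊗ₜ[k] f i u)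
          = ∑ j, (dActL k Sinv (hh j) (conv (α i) β)) ⊗ₜ[k] (kk j • f i u) :=
        fun i => rho_apply Sinv (lam a) hh kk hrep _ _
      simp only [e2, map_sum, LinearMap.sum_apply, dualTensorHom_apply]
      calc ∑ i, ∑ j, (dActL k Sinv (hh j) (conv (α i) β)) t • (kk j • f i u)
          = ∑ i, ∑ j, ∑ p ∈ (rh j).index, ∑ s ∈ rt.index,
              (β (Sinv ((rh j).left p) * rt.right s) * α i (Sinv ((rh j).right p) * rt.left s))
                • (kk j • f i u) := by
            refine Finset.sum_congr rfl fun i _ => Finset.sum_congr rfl fun j _ => ?_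
            rw [dActL_apply, conv_Sinv_mul Sinv hS1 hS2 (α i) β (hh j) t (rh j) rt]
            rw [Finset.sum_smul]
            refine Finset.sum_congr rfl fun p _ => ?_
            rw [Finset.sum_smul]
            refine Finset.sum_congr rfl fun s _ => ?_
            rw [mul_comm (α i (Sinv ((rh j).right p) * rt.left s)) _]
          _ = ∑ i, ∑ j, ∑ s ∈ rt.index, ∑ p ∈ (rh j).index,
              (β (Sinv ((rh j).left p) * rt.right s) * α i (Sinv ((rh j).right p) * rt.left s))
                • (kk j • f i u) := by
            exact Finset.sum_congr rfl fun i _ => Finset.sum_congr rfl fun j _ =>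
              Finset.sum_comm
          _ = ∑ i, ∑ s ∈ rt.index, ∑ j, ∑ p ∈ (rh j).index,
              (β (Sinv ((rh j).left p) * rt.right s) * α i (Sinv ((rh j).right p) * rt.left s))
                • (kk j • f i u) := Finset.sum_congr rfl fun i _ => Finset.sum_comm
          _ = ∑ s ∈ rt.index, ∑ i, ∑ j, ∑ p ∈ (rh j).index,
              (β (Sinv ((rh j).left p) * rt.right s) * α i (Sinv ((rh j).right p) * rt.left s))
                • (kk j • f i u) := Finset.sum_comm
    rw [hLHS, hRHS]
    exact Finset.sum_congr rfl fun s _ => Finset.sum_congr rfl fun i _ => key2 i s
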